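/- Let σ > 0, a < 0, h > 0 and N ≥ 1 an integer; set T = N·h. Define m4(s,t) = (σ⁴/(4a²))(e^{2as} − 1) e^{2at} [(e^{−2as} − e^{−2at}) + 3(1 − e^{−2as})] for 0 ≤ s ≤ t. Then h² [ 2 Σ_{0 ≤ k < l ≤ N−1} m4(kh, lh) + Σ_{k=0}^{N−1} m4(kh, kh) ] = σ⁴ [ h²(e^{2aT} − 1)(8e^{2ah} + 3e^{2aT} + 1) + T²(e^{2ah} − 1)² − 2hT(e^{2ah} − 1)(e^{2ah} + 5e^{2aT}) ] / (4a²(e^{2ah} − 1)²). -/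

import Mathlib

lemma stmt_11_key (q : ℝ) (hq0 : 0 < q) (hq1 : q ≠ 1) (N : ℕ) :
    (2 * ∑ l ∈ Finset.range N, ∑ k ∈ Finset.range l,
        (q ^ k - 1) * q ^ l * ((q ^ k)⁻¹ - (q ^ l)⁻¹ + 3 * (1 - (q ^ k)⁻¹)) +
      ∑ k ∈ Finset.range N,
        (q ^ k - 1) * q ^ k * ((q ^ k)⁻¹ - (q ^ k)⁻¹ + 3 * (1 - (q ^ k)⁻¹))) * (q - 1) ^ 2
    = (q ^ N - 1) * (8 * q + 3 * q ^ N + 1) + (N : ℝ) ^ 2 * (q - 1) ^ 2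
      - 2 * N * (q - 1) * (q + 5 * q ^ N) := by
  have hq : q ≠ 0 := hq0.ne'
  have hq1' : q - 1 ≠ 0 := sub_ne_zero.mpr hq1
  induction N with
  | zero => simp
  | succ n ih =>
    have hpow : (q : ℝ) ^ n ≠ 0 := pow_ne_zero _ hq
    have hX := geom_sum_mul q n
    have hY : (∑ k ∈ Finset.range n, (q⁻¹) ^ k) * (q - 1) * q ^ n = q ^ (n + 1) - q := by
      have h := geom_sum_mul q⁻¹ n
      have h2 : ((q ^ n)⁻¹ - 1) * (q * q ^ n) = (q ^(n+1) - q) * (-1) := by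
        field_simp
        ring
      calc (∑ k ∈ Finset.range n, (q⁻¹) ^ k) * (q - 1) * q ^ n
          = ((∑ k ∈ Finset.range n, (q⁻¹) ^ k) * (q⁻¹ - 1)) * (-(q * q ^ n)) := by
            field_simp
            ring
        _ = ((q⁻¹) ^ n - 1) * (-(q * q ^ n)) := by rw [h]
        _ = q ^ (n + 1) - q := by
            rw [inv_pow]
            have := h2
            nlinarith [h2]
    have hg : ∀ k ∈ Finset.range n,
        (q ^ k - 1) * q ^ n * ((q ^ k)⁻¹ - (q ^ n)⁻¹ + 3 * (1 - (q ^ k)⁻¹))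
        = q ^ n * (3 * q ^ k - 5 + 2 * (q⁻¹) ^ k) + (1 - q ^ k) := by
      intro k _
      have hk : (q : ℝ) ^ k ≠ 0 := pow_ne_zero _ hq
      rw [inv_pow]
      field_simp
      ring
    have hgnn : (q ^ n - 1) * q ^ n * ((q ^ n)⁻¹ - (q ^ n)⁻¹ + 3 * (1 - (q ^ n)⁻¹))
        = 3 * (q ^ n - 1) ^ 2 := by
      field_simp
      ring
    rw [Finset.sum_range_succ, Finset.sum_range_succ, Finset.sum_congr rfl hg, hgnn]
    have hsplit : ∑ k ∈ Finset.range n, (q ^ n * (3 * q ^ k - 5 + 2 * (q⁻¹) ^ k) + (1 - q ^ k))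
        = q ^ n * (3 * (∑ k ∈ Finset.range n, q ^ k) - 5 * n
            + 2 * (∑ k ∈ Finset.range n, (q⁻¹) ^ k))
          + ((n : ℝ) - ∑ k ∈ Finset.range n, q ^ k) := by
      rw [Finset.sum_add_distrib, ← Finset.mul_sum, Finset.sum_sub_distrib, Finset.sum_const,
        Finset.card_range, Finset.sum_add_distrib, Finset.sum_sub_distrib, Finset.sum_const,
        Finset.card_range, ← Finset.mul_sum, ← Finset.mul_sum]
      push_cast
      ring
    rw [hsplit]
    push_cast
    linear_combination ih + (6 * q ^ n - 2) * (q - 1) * hX + 4 * (q - 1) * hY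

/-- The nested geometric-sum identity in the proof of Theorem 3.1: with
`m4(s,t) = (σ⁴/(4a²))(e^{2as} − 1)e^{2at}[(e^{−2as} − e^{−2at}) + 3(1 − e^{−2as})]`
for `0 ≤ s ≤ t`, `T = N·h`, we have
`h²[2 Σ_{0 ≤ k < l ≤ N−1} m4(kh, lh) + Σ_{k=0}^{N−1} m4(kh, kh)]
 = σ⁴[h²(e^{2aT}−1)(8e^{2ah}+3e^{2aT}+1) + T²(e^{2ah}−1)² − 2hT(e^{2ah}−1)(e^{2ah}+5e^{2aT})]
    / (4a²(e^{2ah}−1)²)`. -/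
theorem stmt_11 (σ a h : ℝ) (N : ℕ) (hσ : 0 < σ) (ha : a < 0) (hh : 0 < h) (hN : 1 ≤ N)
    (m4 : ℝ → ℝ → ℝ)
    (hm4 : ∀ s t : ℝ, 0 ≤ s → s ≤ t →
      m4 s t = σ ^ 4 / (4 * a ^ 2) * (Real.exp (2 * a * s) - 1) * Real.exp (2 * a * t) *
        ((Real.exp (-2 * a * s) - Real.exp (-2 * a * t)) +
          3 * (1 - Real.exp (-2 * a * s)))) :
    h ^ 2 * (2 * ∑ l ∈ Finset.range N, ∑ k ∈ Finset.range l, m4 (k * h) (l * h) +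
        ∑ k ∈ Finset.range N, m4 (k * h) (k * h)) =
      σ ^ 4 * (h ^ 2 * (Real.exp (2 * a * (N * h)) - 1) *
            (8 * Real.exp (2 * a * h) + 3 * Real.exp (2 * a * (N * h)) + 1) +
          (N * h) ^ 2 * (Real.exp (2 * a * h) - 1) ^ 2 -
          2 * h * (N * h) * (Real.exp (2 * a * h) - 1) *
            (Real.exp (2 * a * h) + 5 * Real.exp (2 * a * (N * h)))) /
        (4 * a ^ 2 * (Real.exp (2 * a * h) - 1) ^ 2) := by
  set q : ℝ := Real.exp (2 * a * h) with hqdef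
  have e1 : ∀ k : ℕ, Real.exp (2 * a * ((k : ℝ) * h)) = q ^ k := by
    intro k
    rw [show 2 * a * ((k : ℝ) * h) = (k : ℕ) * (2 * a * h) by push_cast; ring,
      Real.exp_nat_mul]
  have e2 : ∀ k : ℕ, Real.exp (-2 * a * ((k : ℝ) * h)) = (q ^ k)⁻¹ := by
    intro k
    rw [show -2 * a * ((k : ℝ) * h) = -((k : ℕ) * (2 * a * h)) by push_cast; ring,
      Real.exp_neg, Real.exp_nat_mul]
  have hm : ∀ k l : ℕ, k ≤ l → m4 ((k : ℝ) * h) ((l : ℝ) * h)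
      = σ ^ 4 / (4 * a ^ 2) *
        ((q ^ k - 1) * q ^ l * ((q ^ k)⁻¹ - (q ^ l)⁻¹ + 3 * (1 - (q ^ k)⁻¹))) := by
    intro k l hkl
    rw [hm4 ((k : ℝ) * h) ((l : ℝ) * h)
      (by positivity)
      (by
        have : (k : ℝ) ≤ (l : ℝ) := by exact_mod_cast hkl
        nlinarith)]
    rw [e1, e1, e2, e2]
    ring
  have hq0 : 0 < q := Real.exp_pos _
  have hq1 : q ≠ 1 := by
    rw [hqdef, Ne, Real.exp_eq_one_iff]
    nlinarith
  have hq1' : q - 1 ≠ 0 := sub_ne_zero.mpr hq1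
  have ha' : a ≠ 0 := ha.ne
  have key := stmt_11_key q hq0 hq1 N
  have hs1 : ∑ l ∈ Finset.range N, ∑ k ∈ Finset.range l, m4 ((k : ℝ) * h) ((l : ℝ) * h)
      = σ ^ 4 / (4 * a ^ 2) * ∑ l ∈ Finset.range N, ∑ k ∈ Finset.range l,
          (q ^ k - 1) * q ^ l * ((q ^ k)⁻¹ - (q ^ l)⁻¹ + 3 * (1 - (q ^ k)⁻¹)) := by
    rw [Finset.mul_sum]
    refine Finset.sum_congr rfl fun l _ => ?_
    rw [Finset.mul_sum]
    refine Finset.sum_congr rfl fun k hk => ?_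
    exact hm k l (le_of_lt (Finset.mem_range.mp hk))
  have hs2 : ∑ k ∈ Finset.range N, m4 ((k : ℝ) * h) ((k : ℝ) * h)
      = σ ^ 4 / (4 * a ^ 2) * ∑ k ∈ Finset.range N,
          (q ^ k - 1) * q ^ k * ((q ^ k)⁻¹ - (q ^ k)⁻¹ + 3 * (1 - (q ^ k)⁻¹)) := by
    rw [Finset.mul_sum]
    exact Finset.sum_congr rfl fun k _ => hm k k le_rfl
  rw [hs1, hs2, e1 N]
  set S1 := ∑ l ∈ Finset.range N, ∑ k ∈ Finset.range l,
      (q ^ k - 1) * q ^ l * ((q ^ k)⁻¹ - (q ^ l)⁻¹ + 3 * (1 - (q ^ k)⁻¹)) with hS1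
  set S2 := ∑ k ∈ Finset.range N,
      (q ^ k - 1) * q ^ k * ((q ^ k)⁻¹ - (q ^ k)⁻¹ + 3 * (1 - (q ^ k)⁻¹)) with hS2
  field_simp
  linear_combination key
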